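/- Let f : ℤ^m →ₗ[ℤ] ℤ^n be a ℤ-linear map such that the cokernel ℤ^n ⧸ range f is a free ℤ-module. Then for every field K, the rank of f over K equals the rank of f over ℚ; in particular the rank of f over K is independent of the field K. (This is the direction of the Smith-normal-form argument used in the proof of the paper's Theorem 1: if all cokernels of the induced maps on ℤ-homology are free, the persistent Betti numbers, and hence the persistence diagram, do not depend on the coefficient field.) -/

import Mathlib

/-- The rank of a `ℤ`-linear map `f : ℤ^m → ℤ^n` over a field `K` (regarded as a
`ℤ`-algebra): the rank over `K` of the matrix of `f` with entries mapped through
`ℤ → K`, i.e. the `K`-dimension of the range of the induced `K`-linear map. -/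
noncomputable def rankOver {m n : ℕ} (f : (Fin m → ℤ) →ₗ[ℤ] (Fin n → ℤ))
    (K : Type*) [Field K] : ℕ :=
  ((LinearMap.toMatrix (Pi.basisFun ℤ (Fin m)) (Pi.basisFun ℤ (Fin n)) f).map
    (Int.cast : ℤ → K)).rank

section aux
variable {n : ℕ} {K : Type*} [Field K]

/-- The coordinatewise cast `ℤ^n → K^n` as a `ℤ`-linear map. -/
def castLin (K : Type*) [Field K] (n : ℕ) : (Fin n → ℤ) →ₗ[ℤ] (Fin n → K) where
  toFun x := fun i => (x i : K)
  map_add' x y := by funext i; simp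
  map_smul' z x := by
    funext i
    simp [zsmul_eq_mul]

lemma span_castLin_span (S : Set (Fin n → ℤ)) :
    Submodule.span K (castLin K n '' ((Submodule.span ℤ S : Submodule ℤ (Fin n → ℤ)) : Set _)) =
      Submodule.span K (castLin K n '' S) := by
  apply le_antisymm
  · rw [Submodule.span_le]
    rintro _ ⟨x, hx, rfl⟩
    have h1 : castLin K n x ∈ Submodule.map (castLin K n) (Submodule.span ℤ S) := ⟨x, hx, rfl⟩
    rw [Submodule.map_span] at h1
    have h2 : Submodule.span ℤ (castLin K n '' S) ≤
        (Submodule.span K (castLin K n '' S)).restrictScalars ℤ :=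
      Submodule.span_le.mpr Submodule.subset_span
    exact h2 h1
  · exact Submodule.span_mono (Set.image_mono Submodule.subset_span)

end aux


open Matrix

/-- If the cokernel `ℤ^n ⧸ range f` of a `ℤ`-linear map
`f : ℤ^m → ℤ^n` is a free `ℤ`-module, then for every field `K` the rank of `f` over `K`
equals the rank of `f` over `ℚ`; in particular the rank is independent of the field. -/
theorem rankOver_eq_of_coker_free
    {m n : ℕ} (f : (Fin m → ℤ) →ₗ[ℤ] (Fin n → ℤ))
    (hfree : Module.Free ℤ ((Fin n → ℤ) ⧸ LinearMap.range f)) :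
    ∀ (K : Type) [Field K], rankOver f K = rankOver f ℚ := by
  classical
  set N := LinearMap.range f with hN
  obtain ⟨r, bM, bN, g, a, snf⟩ := N.smithNormalForm (Pi.basisFun ℤ (Fin n))
  -- each `a i` is a unit
  have ha : ∀ i, IsUnit (a i) := by
    intro i
    have hbNne : ((bN i : Fin n → ℤ)) ≠ 0 := by
      intro h
      exact bN.ne_zero i (Subtype.coe_injective (by simpa using h))
    have hane : a i ≠ 0 := by
      intro h
      rw [snf i, h, zero_smul] at hbNne
      exact hbNne rfl
    -- torsion argument: bM (g i) ∈ N
    have hmem : bM (g i) ∈ N := by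
      have hq : a i • (Submodule.Quotient.mk (bM (g i)) : (Fin n → ℤ) ⧸ N) = 0 := by
        rw [← Submodule.Quotient.mk_smul, Submodule.Quotient.mk_eq_zero, ← snf i]
        exact (bN i).2
      have := hfree
      rcases smul_eq_zero.mp hq with h | h
      · exact absurd h hane
      · exact (Submodule.Quotient.mk_eq_zero N).mp h
    -- express bM (g i) in the bN basis
    obtain ⟨y, hy0⟩ : ∃ y : N, (y : Fin n → ℤ) = bM (g i) := ⟨⟨_, hmem⟩, rfl⟩
    have hy : (y : Fin n → ℤ) = ∑ j, (bN.repr y j * a j) • bM (g j) := by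
      conv_lhs => rw [← bN.sum_repr y]
      push_cast
      refine Finset.sum_congr rfl fun j _ => ?_
      rw [snf j, smul_smul]
    have h1 : bM.repr (y : Fin n → ℤ) (g i) = bN.repr y i * a i := by
      rw [hy]
      simp only [map_sum, _root_.map_smul, bM.repr_self]
      rw [Finset.sum_apply']
      rw [Finset.sum_eq_single i]
      · simp
      · intro j _ hji
        simp [Finsupp.single_apply, g.injective.ne hji]
      · simp
    have h2 : bM.repr (y : Fin n → ℤ) (g i) = 1 := by rw [hy0]; simp
    rw [h1] at h2
    exact IsUnit.of_mul_eq_one _ (by rw [mul_comm] at h2; exact h2)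
  -- the rank over any field equals r
  suffices hK : ∀ (K : Type) [Field K], rankOver f K = r by
    intro K _; rw [hK K, hK ℚ]
  intro K _
  rw [rankOver, Matrix.rank_eq_finrank_span_cols]
  -- the columns of the matrix over K
  have hcol : ((LinearMap.toMatrix (Pi.basisFun ℤ (Fin m)) (Pi.basisFun ℤ (Fin n)) f).map
      (Int.cast : ℤ → K))ᵀ = fun j => castLin K n (f (Pi.basisFun ℤ (Fin m) j)) := by
    funext j i
    simp [LinearMap.toMatrix_apply, castLin]
  -- N as a span of the columns over ℤ
  have hNspan : Submodule.span ℤ (Set.range fun j => f (Pi.basisFun ℤ (Fin m) j)) = N := by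
    rw [hN, LinearMap.range_eq_map, ← (Pi.basisFun ℤ (Fin m)).span_eq, Submodule.map_span,
      ← Set.range_comp]
    rfl
  -- N as the span of the bN basis over ℤ
  have hbNspan : Submodule.span ℤ (Set.range fun i => (bN i : Fin n → ℤ)) = N := by
    have h1 : Submodule.span ℤ (Set.range fun i => (bN i : Fin n → ℤ)) =
        Submodule.map N.subtype (Submodule.span ℤ (Set.range bN)) := by
      rw [Submodule.map_span, ← Set.range_comp]; rfl
    rw [h1, bN.span_eq, Submodule.map_top, Submodule.range_subtype]
  have hspan1 : Submodule.span K (Set.range (((LinearMap.toMatrix (Pi.basisFun ℤ (Fin m))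
      (Pi.basisFun ℤ (Fin n)) f).map (Int.cast : ℤ → K))ᵀ)) =
      Submodule.span K (castLin K n '' (N : Set _)) := by
    rw [hcol, ← hNspan, span_castLin_span, ← Set.range_comp]
    rfl
  set u : Fin r → (Fin n → K) := fun i => castLin K n (bM (g i)) with hu
  have hsm : ∀ i, castLin K n ((bN i : Fin n → ℤ)) = ((a i : ℤ) : K) • u i := by
    intro i
    rw [snf i, _root_.map_smul, Int.cast_smul_eq_zsmul]
  have hunit : ∀ i, ((a i : ℤ) : K) ≠ 0 := by
    intro i
    rcases Int.isUnit_iff.mp (ha i) with h | h <;> simp [h]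
  have hspan2 : Submodule.span K (castLin K n '' (N : Set _)) =
      Submodule.span K (Set.range u) := by
    rw [← hbNspan, span_castLin_span, ← Set.range_comp]
    apply le_antisymm <;> rw [Submodule.span_le] <;> rintro _ ⟨i, rfl⟩
    · rw [Function.comp_apply, hsm i]
      exact Submodule.smul_mem _ _ (Submodule.subset_span ⟨i, rfl⟩)
    · have h3 : u i = ((a i : ℤ) : K)⁻¹ • (castLin K n ((bN i : Fin n → ℤ))) := by
        rw [hsm i, smul_smul, inv_mul_cancel₀ (hunit i), one_smul]
      rw [h3]
      exact Submodule.smul_mem _ _ (Submodule.subset_span ⟨i, rfl⟩)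
  -- linear independence of the casted bM vectors
  have hliM : LinearIndependent K (fun j : Fin n => castLin K n (bM j)) := by
    have hQ : (fun j : Fin n => castLin K n (bM j)) =
        fun j => ((((Pi.basisFun ℤ (Fin n)).toMatrix bM)ᵀ).map (Int.cast : ℤ → K)) j := by
      funext j i
      simp [Module.Basis.toMatrix_apply, castLin]
    rw [hQ]
    apply Matrix.linearIndependent_rows_iff_isUnit.mpr
    rw [Matrix.isUnit_iff_isUnit_det]
    have hdet : IsUnit ((Pi.basisFun ℤ (Fin n)).toMatrix bM).det := by
      refine IsUnit.of_mul_eq_one (bM.toMatrix (Pi.basisFun ℤ (Fin n))).det ?_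
      rw [← Matrix.det_mul, Module.Basis.toMatrix_mul_toMatrix_flip, Matrix.det_one]
    rw [← Matrix.det_transpose] at hdet
    have hmap : ((((Pi.basisFun ℤ (Fin n)).toMatrix bM)ᵀ).map (Int.cast : ℤ → K)).det
        = (((((Pi.basisFun ℤ (Fin n)).toMatrix bM)ᵀ).det : ℤ) : K) := by
      exact ((Int.castRingHom K).map_det _).symm
    change IsUnit ((((Pi.basisFun ℤ (Fin n)).toMatrix bM)ᵀ).map (Int.cast : ℤ → K)).det
    rw [hmap]
    rcases Int.isUnit_iff.mp hdet with h | h <;> simp [h]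
  have hli : LinearIndependent K u := hliM.comp g g.injective
  rw [Matrix.col]
  rw [hspan1, hspan2, finrank_span_eq_card hli, Fintype.card_fin]
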